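/- Let P_t(x) = (1/(2πt)) exp(−|x|²/(2t)). For all a ∈ (0,∞), T₀ ∈ (0,∞), p ∈ ℝ_{≥0}, p₁, p₂ ∈ (0,∞), and y ∈ ℝ²: ∫_{ℝ²} ∫₀^{T₀} (|x'|^{p₁} + t^{p₂}) P_{at}(0) P_t(x') / (1 + |y − x'|^p) dt dx' ≤ C(a,p,p₁,p₂) (Σ_{j=1}^2 (T₀^{j p_j / 2} + T₀^{(j p_j + p)/2})) / (1 + |y|^p). -/

import Mathlib

open MeasureTheory

/-- The two-dimensional heat kernel `P_t(x) = (2πt)⁻¹ exp(−‖x‖²/(2t))`. -/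
noncomputable def heatK (t : ℝ) (x : EuclideanSpace ℝ (Fin 2)) : ℝ :=
  (2 * Real.pi * t)⁻¹ * Real.exp (-‖x‖ ^ 2 / (2 * t))


section Helpers
open Real

lemma ofReal_int_le {α : Type*} [MeasurableSpace α] (μ : Measure α) (f : α → ℝ)
    (hf : 0 ≤ᵐ[μ] f) : ENNReal.ofReal (∫ x, f x ∂μ) ≤ ∫⁻ x, ENNReal.ofReal (f x) ∂μ := by
  by_cases hfi : Integrable f μ
  · exact (ofReal_integral_eq_lintegral_ofReal hfi hf).le
  · simp [integral_undef hfi]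

lemma peetre (p u v w : ℝ) (hp : 0 ≤ p) (hu : 0 ≤ u) (hv : 0 ≤ v) (hw : 0 ≤ w)
    (h : w ≤ u + v) : 1 + w ^ p ≤ 2 ^ p * ((1 + u ^ p) * (1 + v ^ p)) := by
  have h2 : (1:ℝ) ≤ 2 ^ p := Real.one_le_rpow one_le_two hp
  have hup : 0 ≤ u ^ p := Real.rpow_nonneg hu p
  have hvp : 0 ≤ v ^ p := Real.rpow_nonneg hv p
  have key : w ^ p ≤ 2 ^ p * (u ^ p + v ^ p) := by
    rcases le_total u v with huv | huv
    · calc w ^ p ≤ (2 * v) ^ p := Real.rpow_le_rpow hw (by linarith) hp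
        _ = 2 ^ p * v ^ p := Real.mul_rpow (by norm_num) hv
        _ ≤ 2 ^ p * (u ^ p + v ^ p) := by nlinarith
    · calc w ^ p ≤ (2 * u) ^ p := Real.rpow_le_rpow hw (by linarith) hp
        _ = 2 ^ p * u ^ p := Real.mul_rpow (by norm_num) hu
        _ ≤ 2 ^ p * (u ^ p + v ^ p) := by nlinarith
  nlinarith [mul_nonneg hup hvp]

lemma expb (q u : ℝ) (hq : 0 ≤ q) (hu : 0 ≤ u) :
    u ^ q ≤ Real.exp (q ^ 2) * Real.exp (u ^ 2 / 4) := by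
  calc u ^ q ≤ (Real.exp u) ^ q :=
        Real.rpow_le_rpow hu (by linarith [Real.add_one_le_exp u]) hq
    _ = Real.exp (u * q) := by
        rw [Real.rpow_def_of_pos (Real.exp_pos u), Real.log_exp]
    _ ≤ Real.exp (q ^ 2 + u ^ 2 / 4) := Real.exp_le_exp.2 (by nlinarith [sq_nonneg (q - u/2)])
    _ = _ := Real.exp_add _ _

lemma mpt (q t c : ℝ) (hq : 0 ≤ q) (ht : 0 < t) (hc : 0 ≤ c) :
    c ^ q * Real.exp (-c ^ 2 / (2 * t)) ≤
      Real.exp (q ^ 2) * t ^ (q / 2) * Real.exp (-(4 * t)⁻¹ * c ^ 2) := by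
  have hst : (0:ℝ) < Real.sqrt t := Real.sqrt_pos.2 ht
  have key : c ^ q ≤ Real.exp (q ^ 2) * t ^ (q / 2) * Real.exp (c ^ 2 / (4 * t)) := by
    have h1 := expb q (c / Real.sqrt t) hq (by positivity)
    have h2 : (c / Real.sqrt t) ^ q = c ^ q / t ^ (q / 2) := by
      rw [Real.div_rpow hc (Real.sqrt_nonneg t), Real.sqrt_eq_rpow,
        ← Real.rpow_mul ht.le]
      ring_nf
    have h3 : (c / Real.sqrt t) ^ 2 / 4 = c ^ 2 / (4 * t) := by
      rw [div_pow, Real.sq_sqrt ht.le]; ring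
    rw [h2, h3] at h1
    have htq : (0:ℝ) < t ^ (q / 2) := Real.rpow_pos_of_pos ht _
    calc c ^ q = c ^ q / t ^ (q / 2) * t ^ (q / 2) := by field_simp
      _ ≤ Real.exp (q ^ 2) * Real.exp (c ^ 2 / (4 * t)) * t ^ (q / 2) :=
          mul_le_mul_of_nonneg_right h1 htq.le
      _ = _ := by ring
  calc c ^ q * Real.exp (-c ^ 2 / (2 * t))
      ≤ (Real.exp (q ^ 2) * t ^ (q / 2) * Real.exp (c ^ 2 / (4 * t))) *
          Real.exp (-c ^ 2 / (2 * t)) :=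
        mul_le_mul_of_nonneg_right key (Real.exp_nonneg _)
    _ = Real.exp (q ^ 2) * t ^ (q / 2) * Real.exp (c ^ 2 / (4 * t) + -c ^ 2 / (2 * t)) := by
        rw [Real.exp_add]; ring
    _ = _ := by
        congr 1
        congr 1
        field_simp
        ring

lemma gauss_integrable (b : ℝ) (hb : 0 < b) :
    Integrable (fun x : EuclideanSpace ℝ (Fin 2) => Real.exp (-b * ‖x‖ ^ 2)) := by
  have h := (GaussianFourier.integrable_cexp_neg_mul_sq_norm_add (V := EuclideanSpace ℝ (Fin 2))
    (b := (b : ℂ)) (by simpa using hb) 0 0).norm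
  refine h.congr (Filter.Eventually.of_forall fun x => ?_)
  simp [Complex.norm_exp, ← Complex.ofReal_pow]

lemma gauss_value (b : ℝ) (hb : 0 < b) :
    ∫ x : EuclideanSpace ℝ (Fin 2), Real.exp (-b * ‖x‖ ^ 2) = π / b := by
  rw [GaussianFourier.integral_rexp_neg_mul_sq_norm hb]
  simp [finrank_euclideanSpace_fin]

lemma rpow_Ioo_integrable (β T : ℝ) (hβ : 0 < β) (hT : 0 < T) :
    IntegrableOn (fun t : ℝ => t ^ (β - 1)) (Set.Ioo 0 T) :=
  ((intervalIntegrable_iff_integrableOn_Ioc_of_le hT.le).mp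
    (intervalIntegral.intervalIntegrable_rpow' (by linarith))).mono_set Set.Ioo_subset_Ioc_self

lemma rpow_Ioo_value (β T : ℝ) (hβ : 0 < β) (hT : 0 < T) :
    ∫ t in Set.Ioo 0 T, t ^ (β - 1) = T ^ β / β := by
  rw [← integral_Ioc_eq_integral_Ioo, ← intervalIntegral.integral_of_le hT.le,
    integral_rpow (Or.inl (by linarith))]
  rw [sub_add_cancel, Real.zero_rpow hβ.ne']
  ring

lemma keyx (p p₁ p₂ t c : ℝ) (hp : 0 ≤ p) (hp₁ : 0 < p₁) (hp₂ : 0 < p₂) (ht : 0 < t)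
    (hc : 0 ≤ c) :
    (c ^ p₁ + t ^ p₂) * (1 + c ^ p) * Real.exp (-c ^ 2 / (2 * t)) ≤
      (Real.exp (p₁ ^ 2) * t ^ (p₁ / 2) + Real.exp ((p₁ + p) ^ 2) * t ^ ((p₁ + p) / 2)
        + t ^ p₂ + Real.exp (p ^ 2) * t ^ (p₂ + p / 2)) * Real.exp (-(4 * t)⁻¹ * c ^ 2) := by
  have hE2 : Real.exp (-c ^ 2 / (2 * t)) ≤ Real.exp (-(4 * t)⁻¹ * c ^ 2) := by
    apply Real.exp_le_exp.2
    rw [neg_div, neg_mul, neg_le_neg_iff, inv_mul_eq_div]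
    have hc2 : (0:ℝ) ≤ c ^ 2 := sq_nonneg c
    have : (0:ℝ) < 2 * t := by linarith
    apply div_le_div_of_nonneg_left hc2 this (by linarith)
  have h1 := mpt p₁ t c hp₁.le ht hc
  have h2 := mpt (p₁ + p) t c (by linarith) ht hc
  have h4 := mpt p t c hp ht hc
  have htp₂ : (0:ℝ) ≤ t ^ p₂ := (Real.rpow_pos_of_pos ht _).le
  have h3 : t ^ p₂ * Real.exp (-c ^ 2 / (2 * t)) ≤ t ^ p₂ * Real.exp (-(4 * t)⁻¹ * c ^ 2) :=
    mul_le_mul_of_nonneg_left hE2 htp₂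
  have h4' : t ^ p₂ * (c ^ p * Real.exp (-c ^ 2 / (2 * t))) ≤
      t ^ p₂ * (Real.exp (p ^ 2) * t ^ (p / 2) * Real.exp (-(4 * t)⁻¹ * c ^ 2)) :=
    mul_le_mul_of_nonneg_left h4 htp₂
  have hsplit : c ^ (p₁ + p) = c ^ p₁ * c ^ p := Real.rpow_add' hc (by positivity)
  have hsplit2 : t ^ (p₂ + p / 2) = t ^ p₂ * t ^ (p / 2) := Real.rpow_add ht _ _
  calc (c ^ p₁ + t ^ p₂) * (1 + c ^ p) * Real.exp (-c ^ 2 / (2 * t))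
      = c ^ p₁ * Real.exp (-c ^ 2 / (2 * t)) + c ^ (p₁ + p) * Real.exp (-c ^ 2 / (2 * t))
        + t ^ p₂ * Real.exp (-c ^ 2 / (2 * t))
        + t ^ p₂ * (c ^ p * Real.exp (-c ^ 2 / (2 * t))) := by rw [hsplit]; ring
    _ ≤ Real.exp (p₁ ^ 2) * t ^ (p₁ / 2) * Real.exp (-(4 * t)⁻¹ * c ^ 2)
        + Real.exp ((p₁ + p) ^ 2) * t ^ ((p₁ + p) / 2) * Real.exp (-(4 * t)⁻¹ * c ^ 2)
        + t ^ p₂ * Real.exp (-(4 * t)⁻¹ * c ^ 2)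
        + t ^ p₂ * (Real.exp (p ^ 2) * t ^ (p / 2) * Real.exp (-(4 * t)⁻¹ * c ^ 2)) := by
        gcongr <;> first | exact h1 | exact h2 | exact h3 | exact h4'
    _ = _ := by rw [hsplit2]; ring

lemma heatK_zero (s : ℝ) : heatK s 0 = (2 * Real.pi * s)⁻¹ := by
  simp [heatK]

noncomputable def Sfun (p p₁ p₂ t : ℝ) : ℝ :=
  Real.exp (p₁ ^ 2) * t ^ (p₁ / 2) + Real.exp ((p₁ + p) ^ 2) * t ^ ((p₁ + p) / 2)
    + t ^ p₂ + Real.exp (p ^ 2) * t ^ (p₂ + p / 2)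

lemma Sfun_pos (p p₁ p₂ t : ℝ) (ht : 0 < t) : 0 < Sfun p p₁ p₂ t := by
  unfold Sfun; positivity

lemma xbound (a p p₁ p₂ : ℝ) (ha : 0 < a) (hp : 0 ≤ p) (hp₁ : 0 < p₁) (hp₂ : 0 < p₂)
    (t : ℝ) (ht : 0 < t) (y : EuclideanSpace ℝ (Fin 2)) :
    ∫⁻ x : EuclideanSpace ℝ (Fin 2), ENNReal.ofReal
        ((‖x‖ ^ p₁ + t ^ p₂) * heatK (a * t) 0 * heatK t x / (1 + ‖y - x‖ ^ p)) ≤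
    ENNReal.ofReal ((2 ^ p * (1 + ‖y‖ ^ p)⁻¹ * (π * a)⁻¹) * (t⁻¹ * Sfun p p₁ p₂ t)) := by
  have hY : (0:ℝ) < 1 + ‖y‖ ^ p := by positivity
  have hS := Sfun_pos p p₁ p₂ t ht
  set K : ℝ := 2 ^ p * (1 + ‖y‖ ^ p)⁻¹ *
    ((2 * π * (a * t))⁻¹ * ((2 * π * t)⁻¹ * Sfun p p₁ p₂ t)) with hK
  have pointwise : ∀ x : EuclideanSpace ℝ (Fin 2),
      (‖x‖ ^ p₁ + t ^ p₂) * heatK (a * t) 0 * heatK t x / (1 + ‖y - x‖ ^ p) ≤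
        K * Real.exp (-(4 * t)⁻¹ * ‖x‖ ^ 2) := by
    intro x
    have hden : (0:ℝ) < 1 + ‖y - x‖ ^ p := by positivity
    have hnum : (0:ℝ) ≤ (‖x‖ ^ p₁ + t ^ p₂) * heatK (a * t) 0 * heatK t x := by
      rw [heatK_zero]; unfold heatK
      have h1 : (0:ℝ) < a * t := by positivity
      positivity
    have hinv : (1 + ‖y - x‖ ^ p)⁻¹ ≤ 2 ^ p * (1 + ‖x‖ ^ p) / (1 + ‖y‖ ^ p) := by
      rw [inv_eq_one_div, div_le_div_iff₀ hden hY]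
      have htri : ‖y‖ ≤ ‖y - x‖ + ‖x‖ := by
        simpa using norm_add_le (y - x) x
      have := peetre p (‖y - x‖) (‖x‖) (‖y‖) hp (norm_nonneg _) (norm_nonneg _)
        (norm_nonneg _) htri
      nlinarith
    calc (‖x‖ ^ p₁ + t ^ p₂) * heatK (a * t) 0 * heatK t x / (1 + ‖y - x‖ ^ p)
        = (‖x‖ ^ p₁ + t ^ p₂) * heatK (a * t) 0 * heatK t x * (1 + ‖y - x‖ ^ p)⁻¹ :=
          div_eq_mul_inv _ _
      _ ≤ (‖x‖ ^ p₁ + t ^ p₂) * heatK (a * t) 0 * heatK t x *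
            (2 ^ p * (1 + ‖x‖ ^ p) / (1 + ‖y‖ ^ p)) :=
          mul_le_mul_of_nonneg_left hinv hnum
      _ = (2 ^ p * (1 + ‖y‖ ^ p)⁻¹ * ((2 * π * (a * t))⁻¹ * (2 * π * t)⁻¹)) *
            ((‖x‖ ^ p₁ + t ^ p₂) * (1 + ‖x‖ ^ p) * Real.exp (-‖x‖ ^ 2 / (2 * t))) := by
          rw [heatK_zero]; unfold heatK; ring
      _ ≤ (2 ^ p * (1 + ‖y‖ ^ p)⁻¹ * ((2 * π * (a * t))⁻¹ * (2 * π * t)⁻¹)) *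
            (Sfun p p₁ p₂ t * Real.exp (-(4 * t)⁻¹ * ‖x‖ ^ 2)) := by
          apply mul_le_mul_of_nonneg_left
          · exact keyx p p₁ p₂ t (‖x‖) hp hp₁ hp₂ ht (norm_nonneg x)
          · have h1 : (0:ℝ) < a * t := by positivity
            positivity
      _ = K * Real.exp (-(4 * t)⁻¹ * ‖x‖ ^ 2) := by rw [hK]; ring
  have hb4 : (0:ℝ) < (4 * t)⁻¹ := by positivity
  calc ∫⁻ x : EuclideanSpace ℝ (Fin 2), ENNReal.ofReal
        ((‖x‖ ^ p₁ + t ^ p₂) * heatK (a * t) 0 * heatK t x / (1 + ‖y - x‖ ^ p))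
      ≤ ∫⁻ x : EuclideanSpace ℝ (Fin 2),
          ENNReal.ofReal (K * Real.exp (-(4 * t)⁻¹ * ‖x‖ ^ 2)) :=
        lintegral_mono fun x => ENNReal.ofReal_le_ofReal (pointwise x)
    _ = ENNReal.ofReal (∫ x : EuclideanSpace ℝ (Fin 2),
          K * Real.exp (-(4 * t)⁻¹ * ‖x‖ ^ 2)) := by
        refine (ofReal_integral_eq_lintegral_ofReal
          (((gauss_integrable _ hb4)).const_mul K)
          (Filter.Eventually.of_forall fun x => ?_)).symm
        have hK0 : (0:ℝ) ≤ K := by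
          rw [hK]
          have h1 : (0:ℝ) < a * t := by positivity
          positivity
        positivity
    _ = ENNReal.ofReal (K * (π / (4 * t)⁻¹)) := by
        rw [integral_const_mul, gauss_value _ hb4]
    _ ≤ ENNReal.ofReal ((2 ^ p * (1 + ‖y‖ ^ p)⁻¹ * (π * a)⁻¹) *
          (t⁻¹ * Sfun p p₁ p₂ t)) := by
        apply le_of_eq
        congr 1
        rw [hK]
        have hπ : π ≠ 0 := Real.pi_ne_zero
        field_simp
        ring

noncomputable def Dconst (p p₁ p₂ : ℝ) : ℝ :=
  Real.exp (p₁ ^ 2) / (p₁ / 2) + Real.exp ((p₁ + p) ^ 2) / ((p₁ + p) / 2)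
    + 1 / p₂ + Real.exp (p ^ 2) / (p₂ + p / 2)

lemma term_lint (c β T₀ : ℝ) (hc : 0 ≤ c) (hβ : 0 < β) (hT : 0 < T₀) :
    ∫⁻ t in Set.Ioo (0:ℝ) T₀, ENNReal.ofReal (c * t ^ (β - 1)) =
      ENNReal.ofReal (c * (T₀ ^ β / β)) := by
  have hnn : 0 ≤ᵐ[volume.restrict (Set.Ioo (0:ℝ) T₀)] fun t => c * t ^ (β - 1) := by
    filter_upwards [ae_restrict_mem measurableSet_Ioo] with t ht
    have := ht.1
    positivity
  rw [← ofReal_integral_eq_lintegral_ofReal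
      ((rpow_Ioo_integrable β T₀ hβ hT).const_mul c) hnn,
    integral_const_mul, rpow_Ioo_value β T₀ hβ hT]

lemma tbound (p p₁ p₂ T₀ : ℝ) (hp : 0 ≤ p) (hp₁ : 0 < p₁) (hp₂ : 0 < p₂) (hT : 0 < T₀) :
    ∫⁻ t in Set.Ioo (0:ℝ) T₀, ENNReal.ofReal (t⁻¹ * Sfun p p₁ p₂ t) ≤
      ENNReal.ofReal (Dconst p p₁ p₂ *
        ((T₀ ^ (p₁ / 2) + T₀ ^ ((p₁ + p) / 2)) + (T₀ ^ p₂ + T₀ ^ (p₂ + p / 2)))) := by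
  have hb1 : (0:ℝ) < p₁ / 2 := by linarith
  have hb2 : (0:ℝ) < (p₁ + p) / 2 := by linarith
  have hb4 : (0:ℝ) < p₂ + p / 2 := by linarith
  have hcongr : ∫⁻ t in Set.Ioo (0:ℝ) T₀, ENNReal.ofReal (t⁻¹ * Sfun p p₁ p₂ t) =
      ∫⁻ t in Set.Ioo (0:ℝ) T₀,
        (ENNReal.ofReal (Real.exp (p₁ ^ 2) * t ^ (p₁ / 2 - 1))
          + ENNReal.ofReal (Real.exp ((p₁ + p) ^ 2) * t ^ ((p₁ + p) / 2 - 1))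
          + ENNReal.ofReal (1 * t ^ (p₂ - 1))
          + ENNReal.ofReal (Real.exp (p ^ 2) * t ^ (p₂ + p / 2 - 1))) := by
    refine setLIntegral_congr_fun measurableSet_Ioo (fun t ht => ?_)
    have ht0 : (0:ℝ) < t := ht.1
    have e : ∀ β : ℝ, t ^ (β - 1) = t ^ β / t := fun β => by
      rw [Real.rpow_sub ht0, Real.rpow_one]
    have hre : t⁻¹ * Sfun p p₁ p₂ t =
        Real.exp (p₁ ^ 2) * t ^ (p₁ / 2 - 1)
          + (Real.exp ((p₁ + p) ^ 2) * t ^ ((p₁ + p) / 2 - 1)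
          + (1 * t ^ (p₂ - 1)
          + Real.exp (p ^ 2) * t ^ (p₂ + p / 2 - 1))) := by
      unfold Sfun
      rw [e, e, e, e]
      field_simp
      ring
    rw [hre, ENNReal.ofReal_add (by positivity) (by positivity),
      ENNReal.ofReal_add (by positivity) (by positivity),
      ENNReal.ofReal_add (by positivity) (by positivity)]
    ring
  rw [hcongr]
  have m1 : Measurable fun t : ℝ =>
      ENNReal.ofReal (Real.exp (p₁ ^ 2) * t ^ (p₁ / 2 - 1)) := by fun_prop
  have m2 : Measurable fun t : ℝ =>
      ENNReal.ofReal (Real.exp ((p₁ + p) ^ 2) * t ^ ((p₁ + p) / 2 - 1)) := by fun_prop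
  have m3 : Measurable fun t : ℝ => ENNReal.ofReal (1 * t ^ (p₂ - 1)) := by fun_prop
  rw [lintegral_add_right _ (by fun_prop), lintegral_add_right _ (by fun_prop),
    lintegral_add_right _ (by fun_prop)]
  rw [term_lint _ _ _ (Real.exp_nonneg _) hb1 hT, term_lint _ _ _ (Real.exp_nonneg _) hb2 hT,
    term_lint _ _ _ (by norm_num) hp₂ hT, term_lint _ _ _ (Real.exp_nonneg _) hb4 hT]
  rw [← ENNReal.ofReal_add (by positivity) (by positivity),
    ← ENNReal.ofReal_add (by positivity) (by positivity),
    ← ENNReal.ofReal_add (by positivity) (by positivity)]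
  apply ENNReal.ofReal_le_ofReal
  have hT1 : (0:ℝ) < T₀ ^ (p₁ / 2) := Real.rpow_pos_of_pos hT _
  have hT2 : (0:ℝ) < T₀ ^ ((p₁ + p) / 2) := Real.rpow_pos_of_pos hT _
  have hT3 : (0:ℝ) < T₀ ^ p₂ := Real.rpow_pos_of_pos hT _
  have hT4 : (0:ℝ) < T₀ ^ (p₂ + p / 2) := Real.rpow_pos_of_pos hT _
  have d1 : (0:ℝ) < Real.exp (p₁ ^ 2) / (p₁ / 2) := by positivity
  have d2 : (0:ℝ) < Real.exp ((p₁ + p) ^ 2) / ((p₁ + p) / 2) := by positivity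
  have d3 : (0:ℝ) < 1 / p₂ := by positivity
  have d4 : (0:ℝ) < Real.exp (p ^ 2) / (p₂ + p / 2) := by positivity
  have b1 : Real.exp (p₁ ^ 2) * (T₀ ^ (p₁ / 2) / (p₁ / 2)) ≤
      Dconst p p₁ p₂ * T₀ ^ (p₁ / 2) := by
    have : Real.exp (p₁ ^ 2) * (T₀ ^ (p₁ / 2) / (p₁ / 2)) =
        (Real.exp (p₁ ^ 2) / (p₁ / 2)) * T₀ ^ (p₁ / 2) := by ring
    rw [this]
    apply mul_le_mul_of_nonneg_right _ hT1.le
    unfold Dconst; linarith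
  have b2 : Real.exp ((p₁ + p) ^ 2) * (T₀ ^ ((p₁ + p) / 2) / ((p₁ + p) / 2)) ≤
      Dconst p p₁ p₂ * T₀ ^ ((p₁ + p) / 2) := by
    have : Real.exp ((p₁ + p) ^ 2) * (T₀ ^ ((p₁ + p) / 2) / ((p₁ + p) / 2)) =
        (Real.exp ((p₁ + p) ^ 2) / ((p₁ + p) / 2)) * T₀ ^ ((p₁ + p) / 2) := by ring
    rw [this]
    apply mul_le_mul_of_nonneg_right _ hT2.le
    unfold Dconst; linarith
  have b3 : 1 * (T₀ ^ p₂ / p₂) ≤ Dconst p p₁ p₂ * T₀ ^ p₂ := by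
    have : 1 * (T₀ ^ p₂ / p₂) = (1 / p₂) * T₀ ^ p₂ := by ring
    rw [this]
    apply mul_le_mul_of_nonneg_right _ hT3.le
    unfold Dconst; linarith
  have b4 : Real.exp (p ^ 2) * (T₀ ^ (p₂ + p / 2) / (p₂ + p / 2)) ≤
      Dconst p p₁ p₂ * T₀ ^ (p₂ + p / 2) := by
    have : Real.exp (p ^ 2) * (T₀ ^ (p₂ + p / 2) / (p₂ + p / 2)) =
        (Real.exp (p ^ 2) / (p₂ + p / 2)) * T₀ ^ (p₂ + p / 2) := by ring
    rw [this]
    apply mul_le_mul_of_nonneg_right _ hT4.le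
    unfold Dconst; linarith
  nlinarith [b1, b2, b3, b4]

end Helpers

open Real in
/-- For all `a ∈ (0,∞)`, `p ≥ 0`, `p₁, p₂ ∈ (0,∞)` there is `C(a,p,p₁,p₂)` such that
for all `T₀ ∈ (0,∞)` and `y ∈ ℝ²`:
`∫∫₀^{T₀} (‖x'‖^{p₁} + t^{p₂}) P_{at}(0) P_t(x')/(1 + ‖y − x'‖^p) dt dx'
  ≤ C (Σ_{j=1}^2 (T₀^{j p_j/2} + T₀^{(j p_j + p)/2}))/(1 + ‖y‖^p)`. -/
theorem stmt_10 (a p p₁ p₂ : ℝ) (ha : 0 < a) (hp : 0 ≤ p) (hp₁ : 0 < p₁) (hp₂ : 0 < p₂) :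
    ∃ C : ℝ, 0 < C ∧ ∀ T₀ : ℝ, 0 < T₀ → ∀ y : EuclideanSpace ℝ (Fin 2),
      (∫ x' : EuclideanSpace ℝ (Fin 2), ∫ t in Set.Ioo (0:ℝ) T₀,
          (‖x'‖ ^ p₁ + t ^ p₂) * heatK (a * t) 0 * heatK t x' / (1 + ‖y - x'‖ ^ p))
        ≤ C * ((T₀ ^ ((1 * p₁)/2) + T₀ ^ ((1 * p₁ + p)/2))
              + (T₀ ^ ((2 * p₂)/2) + T₀ ^ ((2 * p₂ + p)/2))) / (1 + ‖y‖ ^ p) := by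
  have hD : 0 < Dconst p p₁ p₂ := by unfold Dconst; positivity
  refine ⟨2 ^ p * (π * a)⁻¹ * Dconst p p₁ p₂, by positivity, fun T₀ hT y => ?_⟩
  have hY : (0:ℝ) < 1 + ‖y‖ ^ p := by positivity
  set C : ℝ := 2 ^ p * (π * a)⁻¹ * Dconst p p₁ p₂ with hC
  set c₀ : ℝ := 2 ^ p * (1 + ‖y‖ ^ p)⁻¹ * (π * a)⁻¹ with hc₀
  have hc₀0 : 0 ≤ c₀ := by rw [hc₀]; positivity
  have hfnn : ∀ x : EuclideanSpace ℝ (Fin 2), ∀ t : ℝ, 0 < t →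
      0 ≤ (‖x‖ ^ p₁ + t ^ p₂) * heatK (a * t) 0 * heatK t x / (1 + ‖y - x‖ ^ p) := by
    intro x t ht
    have hat : (0:ℝ) < a * t := by positivity
    rw [heatK_zero]
    unfold heatK
    positivity
  have hgnn : ∀ x : EuclideanSpace ℝ (Fin 2), 0 ≤ ∫ t in Set.Ioo (0:ℝ) T₀,
      (‖x‖ ^ p₁ + t ^ p₂) * heatK (a * t) 0 * heatK t x / (1 + ‖y - x‖ ^ p) :=
    fun x => setIntegral_nonneg measurableSet_Ioo fun t ht => hfnn x t ht.1
  have hRHS0 : 0 ≤ C * ((T₀ ^ ((1 * p₁)/2) + T₀ ^ ((1 * p₁ + p)/2))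
      + (T₀ ^ ((2 * p₂)/2) + T₀ ^ ((2 * p₂ + p)/2))) / (1 + ‖y‖ ^ p) := by
    have hC0 : 0 < C := by rw [hC]; positivity
    positivity
  refine (ENNReal.ofReal_le_ofReal_iff hRHS0).mp ?_
  calc ENNReal.ofReal (∫ x' : EuclideanSpace ℝ (Fin 2), ∫ t in Set.Ioo (0:ℝ) T₀,
          (‖x'‖ ^ p₁ + t ^ p₂) * heatK (a * t) 0 * heatK t x' / (1 + ‖y - x'‖ ^ p))
      ≤ ∫⁻ x' : EuclideanSpace ℝ (Fin 2), ENNReal.ofReal (∫ t in Set.Ioo (0:ℝ) T₀,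
          (‖x'‖ ^ p₁ + t ^ p₂) * heatK (a * t) 0 * heatK t x' / (1 + ‖y - x'‖ ^ p)) :=
        ofReal_int_le _ _ (ae_of_all _ hgnn)
    _ ≤ ∫⁻ x' : EuclideanSpace ℝ (Fin 2), ∫⁻ t in Set.Ioo (0:ℝ) T₀, ENNReal.ofReal
          ((‖x'‖ ^ p₁ + t ^ p₂) * heatK (a * t) 0 * heatK t x' / (1 + ‖y - x'‖ ^ p)) := by
        refine lintegral_mono fun x => ofReal_int_le _ _ ?_
        filter_upwards [ae_restrict_mem measurableSet_Ioo] with t ht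
        exact hfnn x t ht.1
    _ = ∫⁻ t in Set.Ioo (0:ℝ) T₀, ∫⁻ x' : EuclideanSpace ℝ (Fin 2), ENNReal.ofReal
          ((‖x'‖ ^ p₁ + t ^ p₂) * heatK (a * t) 0 * heatK t x' / (1 + ‖y - x'‖ ^ p)) := by
        apply lintegral_lintegral_swap
        apply Measurable.aemeasurable
        unfold heatK
        fun_prop
    _ ≤ ∫⁻ t in Set.Ioo (0:ℝ) T₀, ENNReal.ofReal (c₀ * (t⁻¹ * Sfun p p₁ p₂ t)) := by
        refine lintegral_mono_ae ?_
        filter_upwards [ae_restrict_mem measurableSet_Ioo] with t ht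
        exact xbound a p p₁ p₂ ha hp hp₁ hp₂ t ht.1 y
    _ = ENNReal.ofReal c₀ * ∫⁻ t in Set.Ioo (0:ℝ) T₀,
          ENNReal.ofReal (t⁻¹ * Sfun p p₁ p₂ t) := by
        simp_rw [ENNReal.ofReal_mul hc₀0]
        exact lintegral_const_mul' _ _ ENNReal.ofReal_ne_top
    _ ≤ ENNReal.ofReal c₀ * ENNReal.ofReal (Dconst p p₁ p₂ *
          ((T₀ ^ (p₁ / 2) + T₀ ^ ((p₁ + p) / 2)) + (T₀ ^ p₂ + T₀ ^ (p₂ + p / 2)))) :=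
        mul_le_mul_right (tbound p p₁ p₂ T₀ hp hp₁ hp₂ hT) _
    _ = ENNReal.ofReal (c₀ * (Dconst p p₁ p₂ *
          ((T₀ ^ (p₁ / 2) + T₀ ^ ((p₁ + p) / 2)) + (T₀ ^ p₂ + T₀ ^ (p₂ + p / 2))))) := by
        rw [← ENNReal.ofReal_mul hc₀0]
    _ = ENNReal.ofReal (C * ((T₀ ^ ((1 * p₁)/2) + T₀ ^ ((1 * p₁ + p)/2))
          + (T₀ ^ ((2 * p₂)/2) + T₀ ^ ((2 * p₂ + p)/2))) / (1 + ‖y‖ ^ p)) := by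
        congr 1
        rw [show (1 * p₁) / 2 = p₁ / 2 from by ring,
          show (1 * p₁ + p) / 2 = (p₁ + p) / 2 from by ring,
          show (2 * p₂) / 2 = p₂ from by ring,
          show (2 * p₂ + p) / 2 = p₂ + p / 2 from by ring, hC, hc₀]
        ring
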